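/- Let ν > 0 and 0 ≤ γ₁ < γ₂. There exists a symmetric positive definite matrix P = [[1,p₁₂],[p₁₂,p₂₂]] such that Q_γ P + P Q_γᵀ is positive semi-definite for all γ ∈ [γ₁, γ₂] (where Q_γ = [[0,1],[−γ,ν]]) if and only if √γ₂ − √γ₁ ≤ ν. -/

import Mathlib

open Matrix

lemma dot2 (a b c : ℝ) (x : Fin 2 → ℝ) :
    star x ⬝ᵥ ((!![a,b;b,c] : Matrix (Fin 2) (Fin 2) ℝ) *ᵥ x)
      = a*(x 0)^2 + 2*b*(x 0)*(x 1) + c*(x 1)^2 := by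
  simp [dotProduct, Matrix.mulVec, Fin.sum_univ_two]
  ring

lemma herm2 (a b c : ℝ) : (!![a,b;b,c] : Matrix (Fin 2) (Fin 2) ℝ).IsHermitian := by
  ext i j
  fin_cases i <;> fin_cases j <;> simp [Matrix.conjTranspose_apply]

lemma psd2 {a b c : ℝ} (ha : 0 ≤ a) (hc : 0 ≤ c) (hd : b^2 ≤ a*c) :
    (!![a,b;b,c] : Matrix (Fin 2) (Fin 2) ℝ).PosSemidef := by
  refine Matrix.PosSemidef.of_dotProduct_mulVec_nonneg (herm2 a b c) (fun x => ?_)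
  rw [dot2]
  rcases eq_or_lt_of_le ha with h | h
  · have hb : b = 0 := by nlinarith
    subst hb
    simp [← h]
    positivity
  · nlinarith [sq_nonneg (a*(x 0) + b*(x 1)), sq_nonneg (x 1),
      mul_nonneg (sub_nonneg.mpr hd) (sq_nonneg (x 1))]

lemma pd2 {a b c : ℝ} (ha : 0 < a) (hd : b^2 < a*c) :
    (!![a,b;b,c] : Matrix (Fin 2) (Fin 2) ℝ).PosDef := by
  refine Matrix.PosDef.of_dotProduct_mulVec_pos (herm2 a b c) (fun x hx => ?_)
  rw [dot2]
  have hx' : x 0 ≠ 0 ∨ x 1 ≠ 0 := by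
    by_contra h
    push_neg at h
    exact hx (funext fun i => by fin_cases i <;> simp [h.1, h.2])
  rcases eq_or_ne (x 1) 0 with h1 | h1
  · rcases hx' with h0 | h0
    · rw [h1]; ring_nf; positivity
    · exact absurd h1 h0
  · have : 0 < (x 1)^2 := by positivity
    nlinarith [sq_nonneg (a*(x 0) + b*(x 1))]

lemma of_psd2 {a b c : ℝ} (h : (!![a,b;b,c] : Matrix (Fin 2) (Fin 2) ℝ).PosSemidef) :
    0 ≤ a ∧ 0 ≤ c ∧ b^2 ≤ a*c := by
  have h1 := h.dotProduct_mulVec_nonneg ![1,0]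
  have h2 := h.dotProduct_mulVec_nonneg ![0,1]
  rw [dot2] at h1 h2
  simp at h1 h2
  refine ⟨h1, h2, ?_⟩
  have hq : ∀ t : ℝ, 0 ≤ c * (t*t) + (2*b) * t + a := by
    intro t
    have h3 := h.dotProduct_mulVec_nonneg ![1,t]
    rw [dot2] at h3
    simp at h3
    nlinarith
  have hdis := discrim_le_zero hq
  rw [discrim] at hdis
  nlinarith

lemma Scalc (ν γ p q : ℝ) :
    ((!![0, 1; -γ, ν] : Matrix (Fin 2) (Fin 2) ℝ) * !![1, p; p, q]
      + !![1, p; p, q] * (!![0, 1; -γ, ν] : Matrix (Fin 2) (Fin 2) ℝ)ᵀ)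
    = !![2*p, q - γ + ν*p; q - γ + ν*p, 2*(ν*q - γ*p)] := by
  ext i j
  fin_cases i <;> fin_cases j <;>
    simp [Matrix.mul_apply, Fin.sum_univ_two, Matrix.transpose_apply,
      Matrix.vecHead, Matrix.vecTail, Matrix.vecMul, dotProduct] <;> ring

set_option maxHeartbeats 1000000 in
lemma key_fwd (ν γ₁ γ₂ p q : ℝ) (hν : 0 < ν) (hγ₁ : 0 ≤ γ₁) (hγ : γ₁ < γ₂)
    (hp : 0 ≤ p) (hq : p^2 < q)
    (h1 : (q - γ₁ + ν*p)^2 ≤ (2*p)*(2*(ν*q - γ₁*p)))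
    (h2 : (q - γ₂ + ν*p)^2 ≤ (2*p)*(2*(ν*q - γ₂*p))) :
    Real.sqrt γ₂ - Real.sqrt γ₁ ≤ ν := by
  set m : ℝ := q + ν*p - 2*p^2 with hm
  set c : ℝ := p*(ν-p) with hc
  set D : ℝ := c*(m-c) with hD
  have hid : ∀ γ : ℝ, 4*D - (γ - m)^2
      = (2*p)*(2*(ν*q - γ*p)) - (q - γ + ν*p)^2 := by
    intro γ; rw [hD, hm, hc]; ring
  have h1' : (γ₁ - m)^2 ≤ 4*D := by have := hid γ₁; linarith
  have h2' : (γ₂ - m)^2 ≤ 4*D := by have := hid γ₂; linarith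
  have hDpos : 0 < D := by nlinarith [sq_nonneg (γ₁ + γ₂ - 2*m), sq_nonneg (γ₂ - γ₁)]
  have hDc : D = c*(q - p^2) := by rw [hD, hm, hc]; ring
  have hcpos : 0 < c := by nlinarith [hDc]
  set s : ℝ := Real.sqrt D with hs
  have hs0 : 0 ≤ s := Real.sqrt_nonneg D
  have hs2 : s^2 = D := Real.sq_sqrt hDpos.le
  have hspos : 0 < s := Real.sqrt_pos.mpr hDpos
  have hms : 0 ≤ m - 2*s := by nlinarith [sq_nonneg (s - c)]
  have hg2 : γ₂ ≤ m + 2*s := by nlinarith [h2']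
  have hg1 : m - 2*s ≤ γ₁ := by nlinarith [h1']
  set r : ℝ := Real.sqrt c with hr
  have hr0 : 0 ≤ r := Real.sqrt_nonneg c
  have hr2 : r^2 = c := Real.sq_sqrt hcpos.le
  have hrpos : 0 < r := Real.sqrt_pos.mpr hcpos
  set w : ℝ := Real.sqrt (m - 2*s) with hw
  have hw0 : 0 ≤ w := Real.sqrt_nonneg _
  have hw2 : w^2 = m - 2*s := Real.sq_sqrt hms
  have h2r : 2*r ≤ ν := by
    have hc4 : c ≤ (ν/2)^2 := by nlinarith [sq_nonneg (ν - 2*p)]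
    have h5 := Real.sqrt_le_sqrt hc4
    rw [Real.sqrt_sq (by positivity : (0:ℝ) ≤ ν/2)] at h5
    rw [hr]; linarith
  have hwr : w * r = |s - c| := by
    rw [hw, hr, ← Real.sqrt_mul hms, show (m - 2*s)*c = (s-c)^2 by nlinarith,
      Real.sqrt_sq_eq_abs]
  have hkey : 4*s ≤ ν^2 + 2*ν*w := by
    rcases le_total s c with hsc | hsc
    · nlinarith [mul_nonneg hν.le hw0]
    · rw [abs_of_nonneg (by linarith)] at hwr
      nlinarith [mul_nonneg (sub_nonneg.mpr h2r) (by positivity : (0:ℝ) ≤ 2*s + ν*r)]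
  have hfin : γ₂ ≤ (ν + w)^2 := by nlinarith
  have h3 : Real.sqrt γ₂ ≤ ν + w := by
    calc Real.sqrt γ₂ ≤ Real.sqrt ((ν + w)^2) := Real.sqrt_le_sqrt hfin
    _ = ν + w := Real.sqrt_sq (by positivity)
  have h4 : w ≤ Real.sqrt γ₁ := Real.sqrt_le_sqrt hg1
  linarith

set_option maxHeartbeats 1000000 in
lemma key_bwd (ν γ₁ γ₂ : ℝ) (hν : 0 < ν) (hγ₁ : 0 ≤ γ₁) (hγ : γ₁ < γ₂)
    (hle : Real.sqrt γ₂ - Real.sqrt γ₁ ≤ ν) :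
    ∃ p q : ℝ, p^2 < q ∧ ∀ γ, γ₁ ≤ γ → γ ≤ γ₂ →
      0 ≤ 2*p ∧ 0 ≤ 2*(ν*q - γ*p) ∧ (q - γ + ν*p)^2 ≤ (2*p)*(2*(ν*q - γ*p)) := by
  set a : ℝ := Real.sqrt γ₁ with ha
  set b : ℝ := Real.sqrt γ₂ with hb
  have ha0 : 0 ≤ a := Real.sqrt_nonneg _
  have hb0 : 0 ≤ b := Real.sqrt_nonneg _
  have ha2 : a^2 = γ₁ := Real.sq_sqrt hγ₁
  have hb2 : b^2 = γ₂ := Real.sq_sqrt (by linarith)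
  have hab : a < b := Real.sqrt_lt_sqrt hγ₁ hγ
  set t : ℝ := max (ν/2 - a) (b - ν/2) with ht
  have ht1 : ν/2 - a ≤ t := le_max_left _ _
  have ht2 : b - ν/2 ≤ t := le_max_right _ _
  have ht3 : t ≤ ν/2 + a := max_le (by linarith) (by linarith)
  have ht0 : 0 < t := by
    rcases le_total (ν/2 - a) (b - ν/2) with h | h
    · rw [ht, max_eq_right h]; nlinarith
    · rw [ht, max_eq_left h]; nlinarith
  refine ⟨ν/2, t^2 + ν^2/4, by nlinarith, fun γ hγl hγu => ?_⟩
  have hbt : γ₂ ≤ (t + ν/2)^2 := by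
    nlinarith [mul_nonneg (by linarith : (0:ℝ) ≤ t + ν/2 - b) (by linarith : (0:ℝ) ≤ t + ν/2 + b)]
  have hat : (t - ν/2)^2 ≤ γ₁ := by
    nlinarith [mul_nonneg (by linarith : (0:ℝ) ≤ a - (t - ν/2)) (by linarith : (0:ℝ) ≤ a + (t - ν/2))]
  have hu : γ - (t^2 + ν^2/4) ≤ ν*t := by nlinarith
  have hl : (t^2 + ν^2/4) - γ ≤ ν*t := by nlinarith
  have hq2 : 0 ≤ ν*(t^2 + ν^2/4) - γ*(ν/2) := by
    have h6 : γ ≤ 2*(t^2 + ν^2/4) := by nlinarith [sq_nonneg (t - ν/2)]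
    nlinarith
  have hdet : ((t^2 + ν^2/4) - γ + ν*(ν/2))^2
      ≤ (2*(ν/2))*(2*(ν*(t^2 + ν^2/4) - γ*(ν/2))) := by
    nlinarith [mul_nonneg (by linarith : (0:ℝ) ≤ ν*t - ((t^2 + ν^2/4) - γ))
      (by linarith : (0:ℝ) ≤ ν*t - (γ - (t^2 + ν^2/4)))]
  exact ⟨by linarith, by linarith, hdet⟩

/-- Existence of a uniform matrix `P` for all `γ ∈ [γ₁,γ₂]` iff
`√γ₂ - √γ₁ ≤ ν`. -/
theorem stmt9 (ν γ₁ γ₂ : ℝ) (hν : 0 < ν) (hγ₁ : 0 ≤ γ₁) (hγ : γ₁ < γ₂) :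
    (∃ p12 p22 : ℝ,
      (!![1, p12; p12, p22] : Matrix (Fin 2) (Fin 2) ℝ).PosDef ∧
      ∀ γ ∈ Set.Icc γ₁ γ₂,
        ((!![0, 1; -γ, ν] : Matrix (Fin 2) (Fin 2) ℝ) * !![1, p12; p12, p22]
          + !![1, p12; p12, p22] * (!![0, 1; -γ, ν] : Matrix (Fin 2) (Fin 2) ℝ)ᵀ).PosSemidef)
    ↔ Real.sqrt γ₂ - Real.sqrt γ₁ ≤ ν := by
  constructor
  · rintro ⟨p, q, hP, hS⟩
    have hpq : p^2 < q := by
      have hvec : (![-p, 1] : Fin 2 → ℝ) ≠ 0 := by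
        intro hcon
        have := congrFun hcon 1
        simp at this
      have h := hP.dotProduct_mulVec_pos hvec
      rw [dot2] at h
      simp at h
      nlinarith
    have hS1 := hS γ₁ ⟨le_refl _, hγ.le⟩
    have hS2 := hS γ₂ ⟨hγ.le, le_refl _⟩
    rw [Scalc] at hS1 hS2
    obtain ⟨hA1, hC1, hB1⟩ := of_psd2 hS1
    obtain ⟨hA2, hC2, hB2⟩ := of_psd2 hS2
    exact key_fwd ν γ₁ γ₂ p q hν hγ₁ hγ (by linarith) hpq hB1 hB2
  · intro hle
    obtain ⟨p, q, hpq, h⟩ := key_bwd ν γ₁ γ₂ hν hγ₁ hγ hle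
    refine ⟨p, q, pd2 one_pos (by nlinarith), fun γ hγmem => ?_⟩
    obtain ⟨hA, hC, hB⟩ := h γ hγmem.1 hγmem.2
    rw [Scalc]
    exact psd2 hA hC hB
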